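/- Define T(x,u,v) = (-x/v^2, u v^3/(2x^2 u - v), 1/v) on the set {(x,u,v) ∈ ℝ^3 : v ≠ 0 and 2x^2 u - v ≠ 0}. Then T maps this set into itself (i.e. at the image point the new v-coordinate is nonzero and the new combination 2x'^2 u' - v' is nonzero), and T is an involution: T(T(x,u,v)) = (x,u,v). Hence the point transformation x' = -x/v^2, t' = t, u' = u v^3/(2x^2u - v), v' = 1/v, which maps the potential system v_x = xu, v_t = x u^{-2} u_x + (3/2) u^{-1} into itself, forms a cyclic group of order 2. -/

import Mathlib

/-- The algebraic map `T(x,u,v) = (-x/v², uv³/(2x²u - v), 1/v)` underlying the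
point transformation `x' = -x/v², t' = t, u' = uv³/(2x²u - v), v' = 1/v` of the
potential system `v_x = xu, v_t = x u⁻² u_x + (3/2) u⁻¹`. -/
noncomputable def Tpot : ℝ × ℝ × ℝ → ℝ × ℝ × ℝ :=
  fun p => (-p.1 / p.2.2 ^ 2,
    p.2.1 * p.2.2 ^ 3 / (2 * p.1 ^ 2 * p.2.1 - p.2.2),
    p.2.2⁻¹)

/-- `T` maps the set `{(x,u,v) : v ≠ 0, 2x²u - v ≠ 0}` into itself
and is an involution there; hence the point transformation `x' = -x/v², t' = t,
u' = uv³/(2x²u - v), v' = 1/v` forms a cyclic group of order 2. -/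
theorem stmt16 :
    ∀ x u v : ℝ, v ≠ 0 → 2 * x ^ 2 * u - v ≠ 0 →
      (Tpot (x, u, v)).2.2 ≠ 0 ∧
      2 * (Tpot (x, u, v)).1 ^ 2 * (Tpot (x, u, v)).2.1 - (Tpot (x, u, v)).2.2 ≠ 0 ∧
      Tpot (Tpot (x, u, v)) = (x, u, v) := by
  intro x u v hv hD
  simp only [Tpot]
  refine ⟨inv_ne_zero hv, ?_, ?_⟩
  · have : 2 * (-x / v ^ 2) ^ 2 * (u * v ^ 3 / (2 * x ^ 2 * u - v)) - v⁻¹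
        = (2 * x ^ 2 * u - v)⁻¹ := by
      field_simp
      ring
    rw [this]
    exact inv_ne_zero hD
  · have h2 : 2 * (-x / v ^ 2) ^ 2 * (u * v ^ 3 / (2 * x ^ 2 * u - v)) - v⁻¹ ≠ 0 := by
      have : 2 * (-x / v ^ 2) ^ 2 * (u * v ^ 3 / (2 * x ^ 2 * u - v)) - v⁻¹
          = (2 * x ^ 2 * u - v)⁻¹ := by field_simp; ring
      rw [this]; exact inv_ne_zero hD
    refine Prod.ext ?_ (Prod.ext ?_ ?_) <;> simp only
    · field_simp
    · have : 2 * (-x / v ^ 2) ^ 2 * (u * v ^ 3 / (2 * x ^ 2 * u - v)) - v⁻¹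
          = (2 * x ^ 2 * u - v)⁻¹ := by field_simp; ring
      rw [this, div_inv_eq_mul]
      field_simp
      have hD' : u * 2 * x ^ 2 - v ≠ 0 := by intro h; apply hD; linarith
      rw [mul_div_assoc, div_self hD', mul_one]
    · simp
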